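/- For every nonnegative integer n, ∑_{k=0}^{2n} (-1)^k S(n,k) equals 0 if n is odd and 1 if n is even. -/

import Mathlib

open Finset

/-- Trinomial coefficient: coefficient of x^i in (1+x+x^2)^n, zero for i<0 (and automatically zero for i>2n). -/
def T (n : ℕ) (i : ℤ) : ℕ :=
  if 0 ≤ i then ∑ j ∈ Finset.range (i.toNat + 1), n.choose j * j.choose (i.toNat - j) else 0

/-- Partial sum trinomial coefficient. -/
def S (n : ℕ) (k : ℤ) : ℕ :=
  ∑ j ∈ Finset.range (n + 1), T (n - j) (k - j)

lemma T_cast (m k : ℕ) : T m (k : ℤ) =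
    ∑ j ∈ Finset.range (k + 1), m.choose j * j.choose (k - j) := by
  simp [T]

lemma T_neg (m : ℕ) {i : ℤ} (h : i < 0) : T m i = 0 := by
  simp [T, not_le.2 h]

lemma T_large (m k : ℕ) (h : 2 * m < k) : T m (k : ℤ) = 0 := by
  rw [T_cast]
  apply Finset.sum_eq_zero
  intro j hj
  rcases le_or_gt j m with hjm | hjm
  · rw [Nat.choose_eq_zero_of_lt (show j < k - j by omega), mul_zero]
  · rw [Nat.choose_eq_zero_of_lt hjm, zero_mul]

lemma altT (m : ℕ) :
    ∑ k ∈ Finset.range (2 * m + 1), (-1 : ℤ) ^ k * (T m (k : ℤ) : ℤ) = 1 := by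
  have h1 : ∑ k ∈ Finset.range (2 * m + 1), (-1 : ℤ) ^ k * (T m (k : ℤ) : ℤ)
      = ∑ k ∈ Finset.range (2 * m + 1), ∑ j ∈ Finset.range (k + 1),
          (-1 : ℤ) ^ k * ((m.choose j : ℤ) * (j.choose (k - j) : ℤ)) := by
    refine Finset.sum_congr rfl fun k _ => ?_
    rw [T_cast]
    push_cast
    rw [Finset.mul_sum]
  rw [h1, Finset.sum_comm' (t' := Finset.range (2 * m + 1))
      (s' := fun j => Finset.Ico j (2 * m + 1))
      (by intro k j; simp only [Finset.mem_range, Finset.mem_Ico]; omega)]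
  have h2 : ∀ j ∈ Finset.range (2 * m + 1),
      ∑ k ∈ Finset.Ico j (2 * m + 1),
        (-1 : ℤ) ^ k * ((m.choose j : ℤ) * (j.choose (k - j) : ℤ))
      = if j = 0 then 1 else 0 := by
    intro j hj
    rw [Finset.sum_Ico_eq_sum_range]
    have h3 : ∀ i ∈ Finset.range (2 * m + 1 - j),
        (-1 : ℤ) ^ (j + i) * ((m.choose j : ℤ) * (j.choose (j + i - j) : ℤ))
        = ((-1 : ℤ) ^ j * (m.choose j : ℤ)) * ((-1 : ℤ) ^ i * (j.choose i : ℤ)) := by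
      intro i _
      rw [Nat.add_sub_cancel_left, pow_add]
      ring
    rw [Finset.sum_congr rfl h3, ← Finset.mul_sum]
    rcases le_or_gt j m with hjm | hjm
    · have hsub : Finset.range (j + 1) ⊆ Finset.range (2 * m + 1 - j) := by
        intro x hx
        simp only [Finset.mem_range] at *
        omega
      rw [← Finset.sum_subset hsub (by
        intro x _ hx
        simp only [Finset.mem_range] at hx
        rw [Nat.choose_eq_zero_of_lt (by omega), Nat.cast_zero, mul_zero])]
      rw [Int.alternating_sum_range_choose]
      rcases eq_or_ne j 0 with h | h
      · simp [h]
      · simp [h]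
    · rw [Nat.choose_eq_zero_of_lt hjm]
      have : j ≠ 0 := by omega
      simp [this]
  rw [Finset.sum_congr rfl h2, Finset.sum_ite_eq' (Finset.range (2 * m + 1)) 0 (fun _ => (1 : ℤ))]
  simp

theorem partial_sum_alt_sum (n : ℕ) :
    ∑ k ∈ Finset.range (2 * n + 1), (-1 : ℤ) ^ k * S n k = if Odd n then 0 else 1 := by
  have h1 : ∑ k ∈ Finset.range (2 * n + 1), (-1 : ℤ) ^ k * S n k
      = ∑ k ∈ Finset.range (2 * n + 1), ∑ j ∈ Finset.range (n + 1),
          (-1 : ℤ) ^ k * (T (n - j) ((k : ℤ) - j) : ℤ) := by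
    refine Finset.sum_congr rfl fun k _ => ?_
    rw [S]
    push_cast
    rw [Finset.mul_sum]
  rw [h1, Finset.sum_comm]
  have h2 : ∀ j ∈ Finset.range (n + 1),
      ∑ k ∈ Finset.range (2 * n + 1), (-1 : ℤ) ^ k * (T (n - j) ((k : ℤ) - j) : ℤ)
      = (-1 : ℤ) ^ j := by
    intro j hj
    simp only [Finset.mem_range] at hj
    have hjn : j ≤ n := by omega
    rw [Finset.range_eq_Ico, ← Finset.sum_Ico_consecutive _ (Nat.zero_le j) (by omega)]
    have hz : ∑ k ∈ Finset.Ico 0 j, (-1 : ℤ) ^ k * (T (n - j) ((k : ℤ) - j) : ℤ) = 0 := by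
      apply Finset.sum_eq_zero
      intro k hk
      simp only [Finset.mem_Ico] at hk
      rw [T_neg _ (by omega : ((k : ℤ) - j) < 0)]
      simp
    rw [hz, zero_add, Finset.sum_Ico_eq_sum_range]
    have h3 : ∀ i ∈ Finset.range (2 * n + 1 - j),
        (-1 : ℤ) ^ (j + i) * (T (n - j) (((j + i : ℕ) : ℤ) - j) : ℤ)
        = (-1 : ℤ) ^ j * ((-1 : ℤ) ^ i * (T (n - j) (i : ℤ) : ℤ)) := by
      intro i _
      have : ((j + i : ℕ) : ℤ) - j = (i : ℤ) := by push_cast; ring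
      rw [this, pow_add]
      ring
    rw [Finset.sum_congr rfl h3, ← Finset.mul_sum]
    have hsub : Finset.range (2 * (n - j) + 1) ⊆ Finset.range (2 * n + 1 - j) := by
      intro x hx
      simp only [Finset.mem_range] at *
      omega
    rw [← Finset.sum_subset hsub (by
      intro x _ hx
      simp only [Finset.mem_range] at hx
      rw [T_large _ _ (by omega), Nat.cast_zero, mul_zero])]
    rw [altT, mul_one]
  rw [Finset.sum_congr rfl h2, neg_one_geom_sum]
  by_cases h : Even n <;> simp [h, Nat.even_add_one, ← Nat.not_even_iff_odd]
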